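/- Let n ≥ 2. Identify a polynomial vector field on ℂ^{n+1} with a polynomial map V : ℂ^{n+1} → ℂ^{n+1}, with Lie bracket [V, W](z) = DW(z)·V(z) − DV(z)·W(z), where DV(z) is the derivative (Jacobian) of V at z. Define the three vector fields: A(z) has first component (i/4)(z_1² − 1), second component (i/2) z_{n+1}, last component (i/2) z_1 z_{n+1}, and all other components 0; B(z) has first component z_1, last component z_{n+1}, and all other components 0; C(z) has first component (i/4) z_1², second component (i/2) z_{n+1}, last component (i/2) z_1 z_{n+1}, and all other components 0. Then [B, C] = C, [A, C] = (1/8)·B, and [B, A] = 2C − A; moreover A, B, C are linearly independent over ℝ, so their real span is a 3-dimensional real Lie algebra of vector fields, which is isomorphic to sl(2, ℝ). -/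

import Mathlib

/-- The Lie bracket of (polynomial) vector fields on `ℂ^{n+1}`, viewed as maps
`V : ℂ^{n+1} → ℂ^{n+1}`: `[V, W](z) = DW(z)·V(z) − DV(z)·W(z)`. -/
noncomputable def vfBracket (n : ℕ)
    (V W : (Fin (n + 1) → ℂ) → (Fin (n + 1) → ℂ)) :
    (Fin (n + 1) → ℂ) → (Fin (n + 1) → ℂ) :=
  fun z => fderiv ℂ W z (V z) - fderiv ℂ V z (W z)

/-- The vector field `A` with first component `(i/4)(z₁² − 1)`, second component
`(i/2) z_{n+1}`, last component `(i/2) z₁ z_{n+1}`, and all others `0`. -/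
noncomputable def fieldA (n : ℕ) : (Fin (n + 1) → ℂ) → (Fin (n + 1) → ℂ) := fun z i =>
  if (i : ℕ) = 0 then (Complex.I / 4) * ((z 0) ^ 2 - 1)
  else if (i : ℕ) = 1 then (Complex.I / 2) * z (Fin.last n)
  else if (i : ℕ) = n then (Complex.I / 2) * z 0 * z (Fin.last n)
  else 0

/-- The vector field `B` with first component `z₁`, last component `z_{n+1}`,
and all others `0`. -/
def fieldB (n : ℕ) : (Fin (n + 1) → ℂ) → (Fin (n + 1) → ℂ) := fun z i =>
  if (i : ℕ) = 0 then z 0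
  else if (i : ℕ) = n then z (Fin.last n)
  else 0

/-- The vector field `C` with first component `(i/4) z₁²`, second component
`(i/2) z_{n+1}`, last component `(i/2) z₁ z_{n+1}`, and all others `0`. -/
noncomputable def fieldC (n : ℕ) : (Fin (n + 1) → ℂ) → (Fin (n + 1) → ℂ) := fun z i =>
  if (i : ℕ) = 0 then (Complex.I / 4) * (z 0) ^ 2
  else if (i : ℕ) = 1 then (Complex.I / 2) * z (Fin.last n)
  else if (i : ℕ) = n then (Complex.I / 2) * z 0 * z (Fin.last n)
  else 0

open Complex ContinuousLinearMap

/-- General family of vector fields containing `A`, `B`, `C`. -/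
noncomputable def W (n : ℕ) (p q r : ℂ) : (Fin (n + 1) → ℂ) → (Fin (n + 1) → ℂ) := fun z i =>
  if (i : ℕ) = 0 then p * (z 0) ^ 2 + q * z 0 + r
  else if (i : ℕ) = 1 then 2 * p * z (Fin.last n)
  else if (i : ℕ) = n then 2 * p * z 0 * z (Fin.last n) + q * z (Fin.last n)
  else 0

lemma W_congr (n : ℕ) {p q r p' q' r' : ℂ} (hp : p = p') (hq : q = q') (hr : r = r') :
    W n p q r = W n p' q' r' := by rw [hp, hq, hr]

noncomputable def derivW (n : ℕ) (p q : ℂ) (z : Fin (n + 1) → ℂ) :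
    (Fin (n + 1) → ℂ) →L[ℂ] (Fin (n + 1) → ℂ) :=
  ContinuousLinearMap.pi (fun i =>
    if (i : ℕ) = 0 then (2 * p * z 0 + q) • proj 0
    else if (i : ℕ) = 1 then (2 * p) • proj (Fin.last n)
    else if (i : ℕ) = n then
      (2 * p * z (Fin.last n)) • proj 0 + (2 * p * z 0 + q) • proj (Fin.last n)
    else 0)

lemma hasFDerivAt_W (n : ℕ) (p q r : ℂ) (z : Fin (n + 1) → ℂ) :
    HasFDerivAt (W n p q r) (derivW n p q z) z := by
  rw [hasFDerivAt_pi']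
  intro i
  rw [derivW, ContinuousLinearMap.proj_pi]
  have h0 : HasFDerivAt (fun x : Fin (n+1) → ℂ => x 0)
      (proj (R := ℂ) (φ := fun _ : Fin (n+1) => ℂ) 0) z := hasFDerivAt_apply 0 z
  have hN : HasFDerivAt (fun x : Fin (n+1) → ℂ => x (Fin.last n))
      (proj (R := ℂ) (φ := fun _ : Fin (n+1) => ℂ) (Fin.last n)) z :=
    hasFDerivAt_apply (Fin.last n) z
  by_cases hi0 : (i : ℕ) = 0
  · rw [if_pos hi0]
    have hfun : (fun x : Fin (n+1) → ℂ => W n p q r x i)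
        = fun x => p * (x 0 * x 0) + (q * x 0 + r) := by
      funext x
      simp [W, hi0]
      ring
    rw [hfun]
    have := ((h0.mul h0).const_mul p).add ((h0.const_mul q).add_const r)
    convert this using 1
    ext v
    simp
    ring
    module
  · by_cases hi1 : (i : ℕ) = 1
    · rw [if_neg hi0, if_pos hi1]
      have hfun : (fun x : Fin (n+1) → ℂ => W n p q r x i)
          = fun x => 2 * p * x (Fin.last n) := by
        funext x
        simp [W, hi0, hi1]
      rw [hfun]
      exact hN.const_mul (2 * p)
    · by_cases hin : (i : ℕ) = n
      · rw [if_neg hi0, if_neg hi1, if_pos hin]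
        have hn0 : ¬ n = 0 := by omega
        have hn1 : ¬ n = 1 := by omega
        have hfun : (fun x : Fin (n+1) → ℂ => W n p q r x i)
            = fun x => 2 * p * (x 0 * x (Fin.last n)) + q * x (Fin.last n) := by
          funext x
          simp [W, hi0, hi1, hin, hn0, hn1]
          ring
        rw [hfun]
        have := ((h0.mul hN).const_mul (2 * p)).add (hN.const_mul q)
        convert this using 1
        ext v
        simp
        ring
        module
      · rw [if_neg hi0, if_neg hi1, if_neg hin]
        have hfun : (fun x : Fin (n+1) → ℂ => W n p q r x i) = fun _ => (0:ℂ) := by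
          funext x
          simp [W, hi0, hi1, hin]
        rw [hfun]
        exact hasFDerivAt_const (0:ℂ) z

lemma bracketW (n : ℕ) (hn : 2 ≤ n) (p q r p' q' r' : ℂ) :
    vfBracket n (W n p q r) (W n p' q' r') =
      W n (p' * q - p * q') (2 * (p' * r - p * r')) (q' * r - q * r') := by
  funext z i
  have hd := (hasFDerivAt_W n p q r z).fderiv
  have hd' := (hasFDerivAt_W n p' q' r' z).fderiv
  simp only [vfBracket, hd, hd', Pi.sub_apply, derivW, ContinuousLinearMap.pi_apply]
  have hn0 : ¬ (n = 0) := by omega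
  have hn1 : ¬ (n = 1) := by omega
  by_cases hi0 : (i : ℕ) = 0
  · simp [hi0, W, hn0, hn1]
    ring
  · by_cases hi1 : (i : ℕ) = 1
    · simp [hi0, hi1, W, hn0, hn1]
      ring
    · by_cases hin : (i : ℕ) = n
      · simp [hi0, hi1, hin, W, hn0, hn1]
        ring
      · simp [hi0, hi1, hin, W]

lemma combo (n : ℕ) (hn : 2 ≤ n) (a b c : ℝ) :
    a • fieldA n + b • fieldB n + c • fieldC n
      = W n (((a : ℂ) + (c : ℂ)) * (Complex.I / 4)) (b : ℂ) (-(a : ℂ) * (Complex.I / 4)) := by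
  funext z i
  simp only [Pi.add_apply, Pi.smul_apply, fieldA, fieldB, fieldC, W, Complex.real_smul]
  split_ifs
  any_goals ring
  all_goals (exfalso; omega)

lemma fieldA_eq (n : ℕ) (hn : 2 ≤ n) :
    fieldA n = W n (Complex.I / 4) 0 (-(Complex.I / 4)) := by
  have h := combo n hn 1 0 0
  simp only [one_smul, zero_smul, add_zero] at h
  rw [h]
  exact W_congr n (by push_cast; ring) (by push_cast; ring) (by push_cast; ring)

lemma fieldB_eq (n : ℕ) (hn : 2 ≤ n) : fieldB n = W n 0 1 0 := by
  have h := combo n hn 0 1 0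
  simp only [one_smul, zero_smul, add_zero, zero_add] at h
  rw [h]
  exact W_congr n (by push_cast; ring) (by push_cast; ring) (by push_cast; ring)

lemma fieldC_eq (n : ℕ) (hn : 2 ≤ n) : fieldC n = W n (Complex.I / 4) 0 0 := by
  have h := combo n hn 0 0 1
  simp only [one_smul, zero_smul, add_zero, zero_add] at h
  rw [h]
  exact W_congr n (by push_cast; ring) (by push_cast; ring) (by push_cast; ring)

lemma W_inj (n : ℕ) {p q r : ℂ} (h : W n p q r = 0) : p = 0 ∧ q = 0 ∧ r = 0 := by
  have e0 := congrFun (congrFun h (fun _ => 0)) 0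
  have e1 := congrFun (congrFun h (fun _ => 1)) 0
  have e2 := congrFun (congrFun h (fun _ => 2)) 0
  simp [W] at e0 e1 e2
  refine ⟨by linear_combination (e2 - 2 * e1 + e0) / 2,
    by linear_combination (4 * e1 - e2 - 3 * e0) / 2, e0⟩

open LieAlgebra.SpecialLinear in
/-- The embedding of `sl(2,ℝ)` into vector fields. -/
noncomputable def iotaSL (n : ℕ) :
    (sl (Fin 2) ℝ) →ₗ[ℝ] ((Fin (n + 1) → ℂ) → (Fin (n + 1) → ℂ)) where
  toFun M := W n (((M : Matrix (Fin 2) (Fin 2) ℝ) 0 1 : ℂ) * (Complex.I / 4))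
    (2 * ((M : Matrix (Fin 2) (Fin 2) ℝ) 0 0 : ℂ))
    (((M : Matrix (Fin 2) (Fin 2) ℝ) 1 0 : ℂ) * (4 * Complex.I))
  map_add' M N := by
    funext z i
    simp only [W, AddMemClass.coe_add, Matrix.add_apply, Pi.add_apply]
    push_cast
    split_ifs <;> ring
  map_smul' a M := by
    have hcoe : ((a • M : LieAlgebra.SpecialLinear.sl (Fin 2) ℝ) : Matrix (Fin 2) (Fin 2) ℝ)
        = a • (M : Matrix (Fin 2) (Fin 2) ℝ) := rfl
    funext z i
    simp only [W, hcoe, Matrix.smul_apply, Pi.smul_apply, RingHom.id_apply,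
      Complex.real_smul, smul_eq_mul]
    push_cast
    split_ifs <;> ring

lemma iotaSL_apply (n : ℕ) (M : LieAlgebra.SpecialLinear.sl (Fin 2) ℝ) :
    iotaSL n M = W n (((M : Matrix (Fin 2) (Fin 2) ℝ) 0 1 : ℂ) * (Complex.I / 4))
      (2 * ((M : Matrix (Fin 2) (Fin 2) ℝ) 0 0 : ℂ))
      (((M : Matrix (Fin 2) (Fin 2) ℝ) 1 0 : ℂ) * (4 * Complex.I)) := rfl


/-- The bracket relations `[B,C] = C`, `[A,C] = (1/8)B`, `[B,A] = 2C − A`; moreover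
`A, B, C` are linearly independent over `ℝ`, and their real span is a Lie algebra of
vector fields isomorphic to `sl(2, ℝ)`. -/
theorem sl2_subalgebra_of_fields (n : ℕ) (hn : 2 ≤ n) :
    vfBracket n (fieldB n) (fieldC n) = fieldC n ∧
    vfBracket n (fieldA n) (fieldC n) = (1 / 8 : ℝ) • fieldB n ∧
    vfBracket n (fieldB n) (fieldA n) = (2 : ℝ) • fieldC n - fieldA n ∧
    LinearIndependent ℝ ![fieldA n, fieldB n, fieldC n] ∧
    ∃ ι : (LieAlgebra.SpecialLinear.sl (Fin 2) ℝ) →ₗ[ℝ]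
        ((Fin (n + 1) → ℂ) → (Fin (n + 1) → ℂ)),
      Function.Injective ι ∧
      LinearMap.range ι = Submodule.span ℝ {fieldA n, fieldB n, fieldC n} ∧
      ∀ X Y, ι ⁅X, Y⁆ = vfBracket n (ι X) (ι Y) := by
  have hA := fieldA_eq n hn
  have hB := fieldB_eq n hn
  have hC := fieldC_eq n hn
  refine ⟨?_, ?_, ?_, ?_, ?_⟩
  · rw [hB, hC, bracketW n hn]
    exact W_congr n (by ring) (by ring) (by ring)
  · have hrhs : (1 / 8 : ℝ) • fieldB n = W n 0 (1/8 : ℂ) 0 := by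
      have h := combo n hn 0 (1/8) 0
      simp only [zero_smul, add_zero, zero_add] at h
      rw [h]
      exact W_congr n (by push_cast; ring) (by push_cast; norm_num) (by push_cast; ring)
    rw [hrhs, hA, hC, bracketW n hn]
    refine W_congr n (by ring) ?_ (by ring)
    linear_combination (-(1:ℂ)/8) * Complex.I_sq
  · have hrhs : (2 : ℝ) • fieldC n - fieldA n = W n (Complex.I/4) 0 (Complex.I/4) := by
      have h := combo n hn (-1) 0 2
      have h2 : (2 : ℝ) • fieldC n - fieldA n
          = (-1 : ℝ) • fieldA n + (0 : ℝ) • fieldB n + (2 : ℝ) • fieldC n := by module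
      rw [h2, h]
      exact W_congr n (by push_cast; ring) (by push_cast; ring) (by push_cast; ring)
    rw [hrhs, hB, hA, bracketW n hn]
    exact W_congr n (by ring) (by ring) (by ring)
  · rw [Fintype.linearIndependent_iff]
    intro g hg
    rw [Fin.sum_univ_three] at hg
    simp only [Matrix.cons_val_zero, Matrix.cons_val_one, Matrix.head_cons,
      Matrix.cons_val_two, Matrix.tail_cons] at hg
    rw [combo n hn] at hg
    obtain ⟨hp, hq, hr⟩ := W_inj n hg
    have hg0 : g 0 = 0 := by
      have h := hr
      simp only [neg_mul, neg_eq_zero, mul_eq_zero, div_eq_zero_iff, Complex.I_ne_zero,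
        OfNat.ofNat_ne_zero, or_false, false_or, Complex.ofReal_eq_zero] at h
      exact h
    have hg1 : g 1 = 0 := by exact_mod_cast hq
    have hg2 : g 2 = 0 := by
      rw [hg0] at hp
      simp only [mul_eq_zero, div_eq_zero_iff, Complex.I_ne_zero, OfNat.ofNat_ne_zero,
        or_false, false_or, Complex.ofReal_zero, zero_add, Complex.ofReal_eq_zero] at hp
      exact hp
    intro i
    fin_cases i <;> assumption
  · refine ⟨iotaSL n, ?_, ?_, ?_⟩
    · intro X Y h
      have hsubc : ((X - Y : LieAlgebra.SpecialLinear.sl (Fin 2) ℝ) : Matrix (Fin 2) (Fin 2) ℝ)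
          = (X : Matrix (Fin 2) (Fin 2) ℝ) - (Y : Matrix (Fin 2) (Fin 2) ℝ) := rfl
      have h0 : iotaSL n (X - Y) = 0 := by rw [map_sub, h, sub_self]
      rw [iotaSL_apply] at h0
      obtain ⟨hp, hq, hr⟩ := W_inj n h0
      have e01 : (X : Matrix (Fin 2) (Fin 2) ℝ) 0 1 = (Y : Matrix (Fin 2) (Fin 2) ℝ) 0 1 := by
        have : (((X - Y : LieAlgebra.SpecialLinear.sl (Fin 2) ℝ) :
            Matrix (Fin 2) (Fin 2) ℝ) 0 1 : ℂ) = 0 := by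
          have hI : (Complex.I / 4) ≠ 0 := by simp [Complex.I_ne_zero]
          exact (mul_eq_zero.mp hp).resolve_right hI
        have : ((X - Y : LieAlgebra.SpecialLinear.sl (Fin 2) ℝ) :
            Matrix (Fin 2) (Fin 2) ℝ) 0 1 = 0 := by exact_mod_cast this
        simpa [hsubc, Matrix.sub_apply, sub_eq_zero] using this
      have e00 : (X : Matrix (Fin 2) (Fin 2) ℝ) 0 0 = (Y : Matrix (Fin 2) (Fin 2) ℝ) 0 0 := by
        have : (((X - Y : LieAlgebra.SpecialLinear.sl (Fin 2) ℝ) :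
            Matrix (Fin 2) (Fin 2) ℝ) 0 0 : ℂ) = 0 := by
          have h2 : (2 : ℂ) ≠ 0 := two_ne_zero
          exact (mul_eq_zero.mp hq).resolve_left h2
        have : ((X - Y : LieAlgebra.SpecialLinear.sl (Fin 2) ℝ) :
            Matrix (Fin 2) (Fin 2) ℝ) 0 0 = 0 := by exact_mod_cast this
        simpa [hsubc, Matrix.sub_apply, sub_eq_zero] using this
      have e10 : (X : Matrix (Fin 2) (Fin 2) ℝ) 1 0 = (Y : Matrix (Fin 2) (Fin 2) ℝ) 1 0 := by
        have : (((X - Y : LieAlgebra.SpecialLinear.sl (Fin 2) ℝ) :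
            Matrix (Fin 2) (Fin 2) ℝ) 1 0 : ℂ) = 0 := by
          have hI : (4 * Complex.I) ≠ 0 := by simp [Complex.I_ne_zero]
          exact (mul_eq_zero.mp hr).resolve_right hI
        have : ((X - Y : LieAlgebra.SpecialLinear.sl (Fin 2) ℝ) :
            Matrix (Fin 2) (Fin 2) ℝ) 1 0 = 0 := by exact_mod_cast this
        simpa [hsubc, Matrix.sub_apply, sub_eq_zero] using this
      have hXt : Matrix.trace (X : Matrix (Fin 2) (Fin 2) ℝ) = 0 := X.2
      have hYt : Matrix.trace (Y : Matrix (Fin 2) (Fin 2) ℝ) = 0 := Y.2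
      rw [Matrix.trace_fin_two] at hXt hYt
      have e11 : (X : Matrix (Fin 2) (Fin 2) ℝ) 1 1 = (Y : Matrix (Fin 2) (Fin 2) ℝ) 1 1 := by
        linarith
      apply Subtype.ext
      ext i j
      fin_cases i <;> fin_cases j <;> assumption
    · apply le_antisymm
      · rintro f ⟨M, rfl⟩
        rw [iotaSL_apply]
        set a := (M : Matrix (Fin 2) (Fin 2) ℝ) 0 0
        set b := (M : Matrix (Fin 2) (Fin 2) ℝ) 0 1
        set c := (M : Matrix (Fin 2) (Fin 2) ℝ) 1 0
        have h := combo n hn (-16*c) (2*a) (b + 16*c)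
        have : W n ((b:ℂ) * (Complex.I/4)) (2*(a:ℂ)) ((c:ℂ) * (4*Complex.I))
            = (-16*c) • fieldA n + (2*a) • fieldB n + (b + 16*c) • fieldC n := by
          rw [h]
          exact W_congr n (by push_cast; ring) (by push_cast; ring) (by push_cast; ring)
        rw [this]
        have hA' : fieldA n ∈ ({fieldA n, fieldB n, fieldC n} :
            Set ((Fin (n+1) → ℂ) → (Fin (n+1) → ℂ))) := by simp
        have hB' : fieldB n ∈ ({fieldA n, fieldB n, fieldC n} :
            Set ((Fin (n+1) → ℂ) → (Fin (n+1) → ℂ))) := by simp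
        have hC' : fieldC n ∈ ({fieldA n, fieldB n, fieldC n} :
            Set ((Fin (n+1) → ℂ) → (Fin (n+1) → ℂ))) := by simp
        exact Submodule.add_mem _ (Submodule.add_mem _
          (Submodule.smul_mem _ _ (Submodule.subset_span hA'))
          (Submodule.smul_mem _ _ (Submodule.subset_span hB')))
          (Submodule.smul_mem _ _ (Submodule.subset_span hC'))
      · rw [Submodule.span_le]
        rintro f (rfl | rfl | rfl)
        · refine ⟨⟨!![0, 1; -1/16, 0], show Matrix.trace !![(0:ℝ), 1; -1/16, 0] = 0 by
            norm_num [Matrix.trace_fin_two]⟩, ?_⟩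
          rw [iotaSL_apply, hA]
          refine W_congr n ?_ ?_ ?_ <;> (norm_num; try push_cast; try ring_nf)
        · refine ⟨⟨!![1/2, 0; 0, -1/2], show Matrix.trace !![(1/2:ℝ), 0; 0, -1/2] = 0 by
            norm_num [Matrix.trace_fin_two]⟩, ?_⟩
          rw [iotaSL_apply, hB]
          refine W_congr n ?_ ?_ ?_ <;> (norm_num; try push_cast; try ring_nf)
        · refine ⟨⟨!![0, 1; 0, 0], show Matrix.trace !![(0:ℝ), 1; 0, 0] = 0 by
            norm_num [Matrix.trace_fin_two]⟩, ?_⟩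
          rw [iotaSL_apply, hC]
          refine W_congr n ?_ ?_ ?_ <;> (norm_num; try push_cast; try ring_nf)
    · intro X Y
      have hXt : Matrix.trace (X : Matrix (Fin 2) (Fin 2) ℝ) = 0 := X.2
      have hYt : Matrix.trace (Y : Matrix (Fin 2) (Fin 2) ℝ) = 0 := Y.2
      rw [Matrix.trace_fin_two] at hXt hYt
      have hX11 : (X : Matrix (Fin 2) (Fin 2) ℝ) 1 1 = -((X : Matrix (Fin 2) (Fin 2) ℝ) 0 0) := by
        linarith
      have hY11 : (Y : Matrix (Fin 2) (Fin 2) ℝ) 1 1 = -((Y : Matrix (Fin 2) (Fin 2) ℝ) 0 0) := by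
        linarith
      rw [iotaSL_apply, iotaSL_apply, iotaSL_apply, bracketW n hn]
      refine W_congr n ?_ ?_ ?_
      · simp only [LieAlgebra.SpecialLinear.sl_bracket, Matrix.sub_apply, Matrix.mul_apply,
          Fin.sum_univ_two, hX11, hY11]
        push_cast
        ring
      · simp only [LieAlgebra.SpecialLinear.sl_bracket, Matrix.sub_apply, Matrix.mul_apply,
          Fin.sum_univ_two, hX11, hY11]
        push_cast
        linear_combination (2 : ℂ) * (((X : Matrix (Fin 2) (Fin 2) ℝ) 0 1 : ℂ) *
            ((Y : Matrix (Fin 2) (Fin 2) ℝ) 1 0 : ℂ) -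
            ((Y : Matrix (Fin 2) (Fin 2) ℝ) 0 1 : ℂ) *
            ((X : Matrix (Fin 2) (Fin 2) ℝ) 1 0 : ℂ)) * Complex.I_sq
      · simp only [LieAlgebra.SpecialLinear.sl_bracket, Matrix.sub_apply, Matrix.mul_apply,
          Fin.sum_univ_two, hX11, hY11]
        push_cast
        ring
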